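/- Let A be an invertible n×n real matrix, B ∈ ℝⁿ, T > 0 with I - e^{-AT} invertible, and for τ ∈ [0,T] define x̂(τ) = -(I - e^{-AT})^{-1}(I - e^{-Aτ}) A^{-1} B. Consider the T-periodic input f(t) = 1 for t ∈ [nT, nT+τ) and f(t) = 0 for t ∈ [nT+τ, (n+1)T). Then the solution x(t) of dx/dt = Ax + Bf with x(0) = x̂(τ) satisfies x(T) = x(0), i.e., x̂(τ) is a fixed point of the period map. -/

import Mathlib

open Matrix

/-- `x̂(τ) = -(I - e^{-AT})⁻¹ (I - e^{-Aτ}) A⁻¹ B` is a fixed point of the period map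
sending `x(0)` to `x(T)`, where the dynamics are `dx/dt = Ax + B` on `[0,τ]`
(solution `e^{At}x₀ + (e^{At}-I)A⁻¹B`) and `dx/dt = Ax` on `[τ,T]` (solution `e^{At}x₀`). -/
theorem stmt_4 {n : ℕ} (A : Matrix (Fin n) (Fin n) ℝ) (B : Fin n → ℝ) (T τ : ℝ)
    (hT : 0 < T) (hτ : τ ∈ Set.Icc 0 T)
    (hA : IsUnit A)
    (hIA : IsUnit ((1 : Matrix (Fin n) (Fin n) ℝ) - NormedSpace.exp ((-T) • A)))
    (xhat : Fin n → ℝ)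
    (hxhat : xhat = -((((1 : Matrix (Fin n) (Fin n) ℝ) - NormedSpace.exp ((-T) • A))⁻¹
        * ((1 : Matrix (Fin n) (Fin n) ℝ) - NormedSpace.exp ((-τ) • A)) * A⁻¹).mulVec B)) :
    (NormedSpace.exp ((T - τ) • A)).mulVec
        ((NormedSpace.exp (τ • A)).mulVec xhat
          + ((NormedSpace.exp (τ • A)) - 1).mulVec (A⁻¹.mulVec B))
      = xhat := by
  set E : ℝ → Matrix (Fin n) (Fin n) ℝ := fun t => NormedSpace.exp (t • A) with hE
  set M : Matrix (Fin n) (Fin n) ℝ := 1 - E (-T) with hM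
  set X : Matrix (Fin n) (Fin n) ℝ := M⁻¹ * (1 - E (-τ)) * A⁻¹ with hX
  have hdet : IsUnit M.det := (Matrix.isUnit_iff_isUnit_det _).mp hIA
  have hm : ∀ s t : ℝ, E s * E t = E (s + t) := by
    intro s t
    simp only [hE]
    rw [add_smul, Matrix.exp_add_of_commute _ _ (((Commute.refl A).smul_left s).smul_right t)]
  have h1 : E (T - τ) * E τ = E T := by rw [hm, sub_add_cancel]
  have h2 : E T * E (-τ) = E (T - τ) := by rw [hm, ← sub_eq_add_neg]
  have h3 : E T * E (-T) = 1 := by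
    rw [hm, add_neg_cancel, hE]; simp [NormedSpace.exp_zero]
  have h4 : (E T - 1) * M⁻¹ = E T := by
    have hETM : E T * M = E T - 1 := by rw [hM, mul_sub, mul_one, h3]
    rw [← hETM, mul_assoc, Matrix.mul_nonsing_inv _ hdet, mul_one]
  have key2 : E T * X - X = (E T - E (T - τ)) * A⁻¹ := by
    have : E T * X - X = (E T - 1) * X := by noncomm_ring
    rw [this, hX, ← mul_assoc, ← mul_assoc, h4, mul_sub, mul_one, h2, sub_mul]
  have key : E (T - τ) * (E τ * (-X) + (E τ - 1) * A⁻¹) = -X := by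
    have expand : E (T - τ) * (E τ * (-X) + (E τ - 1) * A⁻¹)
        = -(E T * X) + (E T - E (T - τ)) * A⁻¹ := by
      rw [← h1]; noncomm_ring
    rw [expand, ← key2]; abel
  have hxhat' : xhat = (-X).mulVec B := by
    rw [hxhat, hX, Matrix.neg_mulVec]
  rw [hxhat', Matrix.mulVec_mulVec, Matrix.mulVec_mulVec, ← Matrix.add_mulVec,
    Matrix.mulVec_mulVec]
  exact congrArg (fun m => Matrix.mulVec m B) key
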